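/- Let σ be a greedy coloring of a cograph G and let G1 = (V1,E1) be a connected component of G. Then the set of colors used on G1 is exactly σ(V1) = {1, 2, …, χ(G1)}. -/
import Mathlib


/-! Basic notions: cographs, binary cotrees, hc-colorings, greedy colorings,
recursively minimal (color-minimal) colorings, and counting of hc-colorings. -/

variable {V : Type*}

/-- A cograph is a (finite simple) graph with no induced path on four vertices. -/
def IsCograph (G : SimpleGraph V) : Prop :=
  ¬ ∃ a b c d : V, a ≠ b ∧ a ≠ c ∧ a ≠ d ∧ b ≠ c ∧ b ≠ d ∧ c ≠ d ∧
      G.Adj a b ∧ G.Adj b c ∧ G.Adj c d ∧ ¬ G.Adj a c ∧ ¬ G.Adj a d ∧ ¬ G.Adj b d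

/-- Binary trees whose leaves carry vertices and whose inner nodes carry a label:
`true` = join, `false` = disjoint union. -/
inductive Cotree (V : Type*) where
  | leaf (v : V)
  | node (t : Bool) (l r : Cotree V)

/-- The set of vertices at the leaves of a cotree. -/
def Cotree.leaves : Cotree V → Set V
  | .leaf v => {v}
  | .node _ l r => Cotree.leaves l ∪ Cotree.leaves r

/-- The structural condition for a cotree to describe (an induced subgraph of) `G`:
at every inner node, the leaf sets of the two children are disjoint, and vertices
below different children are adjacent iff the node is a join (`true`) node. -/
def Cotree.Represents (G : SimpleGraph V) : Cotree V → Prop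
  | .leaf _ => True
  | .node b l r => Cotree.Represents G l ∧ Cotree.Represents G r ∧
      Disjoint (Cotree.leaves l) (Cotree.leaves r) ∧
      ∀ x ∈ Cotree.leaves l, ∀ y ∈ Cotree.leaves r, (G.Adj x y ↔ b = true)

/-- `T` is a binary cotree of the graph `G`: it records a recursive construction of
`G` by disjoint unions and joins, and its leaves are exactly the vertices of `G`. -/
def Cotree.IsCotreeOf (T : Cotree V) (G : SimpleGraph V) : Prop :=
  Cotree.Represents G T ∧ Cotree.leaves T = Set.univ

/-- `σ` is an hc-coloring with respect to the cotree `T`: at every join node the color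
sets of the two children are disjoint, and at every union node one of the two color
sets contains the other. -/
def IsHCWrt {α : Type*} (σ : V → α) : Cotree V → Prop
  | .leaf _ => True
  | .node b l r => IsHCWrt σ l ∧ IsHCWrt σ r ∧
      (b = true → Disjoint (σ '' Cotree.leaves l) (σ '' Cotree.leaves r)) ∧
      (b = false → σ '' Cotree.leaves l ⊆ σ '' Cotree.leaves r ∨
                   σ '' Cotree.leaves r ⊆ σ '' Cotree.leaves l)

/-- A greedy coloring: a proper coloring with colors `1, 2, …` such that every vertex
`v` has, for each color `c` with `1 ≤ c < σ v`, a neighbor colored `c`. -/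
def IsGreedyColoring (G : SimpleGraph V) (σ : V → ℕ) : Prop :=
  (∀ x y, G.Adj x y → σ x ≠ σ y) ∧ (∀ v, 1 ≤ σ v) ∧
    ∀ v c, 1 ≤ c → c < σ v → ∃ u, G.Adj v u ∧ σ u = c

/-- The coloring `σ` uses exactly `χ` many colors on the subgraph of `G` induced by `L`. -/
def UsesChiColors {α : Type*} (G : SimpleGraph V) (σ : V → α) (L : Set V) : Prop :=
  (((σ '' L).ncard : ℕ∞) = (G.induce L).chromaticNumber)

/-- `σ` is recursively minimal with respect to the cotree `T`: every subgraph of `G`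
arising in the recursive construction recorded by `T` is colored with the minimum
possible number of colors. -/
def IsRecMinWrt {α : Type*} (G : SimpleGraph V) (σ : V → α) : Cotree V → Prop
  | .leaf v => UsesChiColors G σ {v}
  | .node _ l r => UsesChiColors G σ (Cotree.leaves l ∪ Cotree.leaves r) ∧
      IsRecMinWrt G σ l ∧ IsRecMinWrt G σ r

/-- `σ` is a recursively minimal coloring of `G`, i.e. `(G, σ)` is color-minimal. -/
def IsRecMinColoring {α : Type*} (G : SimpleGraph V) (σ : V → α) : Prop :=
  ∃ T : Cotree V, Cotree.IsCotreeOf T G ∧ IsRecMinWrt G σ T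

/-- `s` occurs as a subtree of `T` (rooted at some vertex of `T`). -/
def Cotree.IsSubtreeOf : Cotree V → Cotree V → Prop
  | s, .leaf v => s = .leaf v
  | s, .node b l r => s = .node b l r ∨ Cotree.IsSubtreeOf s l ∨ Cotree.IsSubtreeOf s r

/-- hc-coloring condition for a coloring defined only on the vertex set `L`. -/
def IsHCOn {α : Type*} {L : Set V} (f : L → α) : Cotree V → Prop
  | .leaf _ => True
  | .node b l r => IsHCOn f l ∧ IsHCOn f r ∧
      (b = true → Disjoint (f '' (Subtype.val ⁻¹' Cotree.leaves l))
                           (f '' (Subtype.val ⁻¹' Cotree.leaves r))) ∧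
      (b = false → f '' (Subtype.val ⁻¹' Cotree.leaves l) ⊆
                     f '' (Subtype.val ⁻¹' Cotree.leaves r) ∨
                   f '' (Subtype.val ⁻¹' Cotree.leaves r) ⊆
                     f '' (Subtype.val ⁻¹' Cotree.leaves l))

/-- The number of hc-colorings of the subgraph of `G` induced by the leaves of `T`,
with respect to `T`, using colors from the fixed color set `Fin k`. -/
noncomputable def hcCount (G : SimpleGraph V) (T : Cotree V) (k : ℕ) : ℕ :=
  Set.ncard {f : ↥(Cotree.leaves T) → Fin k |
    (∀ x y : ↥(Cotree.leaves T), G.Adj ↑x ↑y → f x ≠ f y) ∧ IsHCOn f T}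

/-- The number of hc-colorings of `G` (with respect to some binary cotree of `G`),
using colors from the fixed color set `Fin k`. -/
noncomputable def hcColoringCount {W : Type*} (G : SimpleGraph W) (k : ℕ) : ℕ :=
  Set.ncard {σ : W → Fin k | (∀ x y, G.Adj x y → σ x ≠ σ y) ∧
    ∃ T : Cotree W, Cotree.IsCotreeOf T G ∧ IsHCWrt σ T}
open SimpleGraph

lemma exchange_lemma {V : Type*} [Fintype V] {G : SimpleGraph V} (hG : IsCograph G)
    {σ : V → ℕ} (hσ : IsGreedyColoring G σ) (i : ℕ) (hi : 1 ≤ i)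
    (T : Finset V) (hT : T.Nonempty) (hcl : (T : Set V).Pairwise G.Adj)
    (hgt : ∀ t ∈ T, i < σ t) :
    ∃ y, σ y = i ∧ ∀ t ∈ T, G.Adj y t := by
  classical
  obtain ⟨hprop, hone, hgr⟩ := hσ
  set A : Finset V := Finset.univ.filter (fun y => σ y = i) with hA
  have hAne : A.Nonempty := by
    obtain ⟨t, ht⟩ := hT
    obtain ⟨u, hu, hui⟩ := hgr t i hi (hgt t ht)
    exact ⟨u, by simp [hA, hui]⟩
  obtain ⟨y, hyA, hymax⟩ := A.exists_max_image (fun y => (T.filter (G.Adj y)).card) hAne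
  have hyi : σ y = i := by simpa [hA] using hyA
  refine ⟨y, hyi, ?_⟩
  by_contra h
  push_neg at h
  obtain ⟨t, htT, hyt⟩ := h
  obtain ⟨z, hzt, hzi⟩ := hgr t i hi (hgt t htT)
  have hzy : z ≠ y := fun e => hyt (e ▸ hzt).symm
  have hzyn : ¬ G.Adj y z := fun ha => hprop _ _ ha (by rw [hyi, hzi])
  have hsub : ∀ l ∈ T.filter (G.Adj y), l ∈ T.filter (G.Adj z) := by
    intro l hl
    rw [Finset.mem_filter] at hl ⊢
    obtain ⟨hlT, hyl⟩ := hl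
    refine ⟨hlT, ?_⟩
    by_contra hzl
    have hlt : l ≠ t := fun e => hyt (e ▸ hyl)
    apply hG
    refine ⟨y, l, t, z, hyl.ne, ?_, hzy.symm, hlt, ?_, hzt.ne, hyl,
      hcl hlT htT hlt, hzt, hyt, hzyn, fun ha => hzl ha.symm⟩
    · intro e; exact (hgt t htT).ne' (by rw [← e, hyi])
    · intro e; subst e; exact (hgt l hlT).ne' hzi
  have hss : T.filter (G.Adj y) ⊂ T.filter (G.Adj z) := by
    refine ⟨fun l hl => hsub l hl, fun hc => ?_⟩
    have := hc (Finset.mem_filter.mpr ⟨htT, hzt.symm⟩)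
    exact hyt (Finset.mem_filter.mp this).2
  have hzA : z ∈ A := by simp [hA, hzi]
  exact absurd (hymax z hzA) (not_le.mpr (Finset.card_lt_card hss))

lemma clique_lemma {V : Type*} [Fintype V] {G : SimpleGraph V} (hG : IsCograph G)
    {σ : V → ℕ} (hσ : IsGreedyColoring G σ) (v : V) :
    ∃ S : Finset V, v ∈ S ∧ (S : Set V).Pairwise G.Adj ∧
      σ '' (S : Set V) = Set.Icc 1 (σ v) ∧ S.card = σ v := by
  classical
  have key : ∀ d : ℕ, d < σ v → ∃ S : Finset V, v ∈ S ∧ (S : Set V).Pairwise G.Adj ∧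
      σ '' (S : Set V) = Set.Icc (σ v - d) (σ v) := by
    intro d
    induction d with
    | zero => intro _
              refine ⟨{v}, Finset.mem_singleton_self v, by simp, ?_⟩
              simp
    | succ d ih =>
      intro hd
      obtain ⟨S, hvS, hcl, hcol⟩ := ih (by omega)
      set i := σ v - (d + 1) with hidef
      have hi1 : 1 ≤ i := by omega
      have hgt : ∀ t ∈ S, i < σ t := by
        intro t ht
        have : σ t ∈ Set.Icc (σ v - d) (σ v) := hcol ▸ ⟨t, ht, rfl⟩
        simp only [Set.mem_Icc] at this
        omega
      obtain ⟨y, hyi, hyadj⟩ := exchange_lemma hG hσ i hi1 S ⟨v, hvS⟩ hcl hgt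
      have hyS : y ∉ S := fun h => (hgt y h).ne' hyi
      refine ⟨insert y S, Finset.mem_insert_of_mem hvS, ?_, ?_⟩
      · rw [Finset.coe_insert]
        rw [Set.pairwise_insert]
        exact ⟨hcl, fun b hb _ => ⟨hyadj b hb, (hyadj b hb).symm⟩⟩
      · rw [Finset.coe_insert, Set.image_insert_eq, hcol, hyi]
        ext c
        simp only [Set.mem_insert_iff, Set.mem_Icc]
        omega
  have h1 : 1 ≤ σ v := hσ.2.1 v
  obtain ⟨S, hvS, hcl, hcol⟩ := key (σ v - 1) (by omega)
  have hinj : Set.InjOn σ (S : Set V) := by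
    intro a ha b hb hab
    by_contra hne
    exact hσ.1 a b (hcl ha hb hne) hab
  have hcard : S.card = σ v := by
    have : (S.image σ : Finset ℕ) = Finset.Icc 1 (σ v) := by
      apply Finset.coe_injective
      rw [Finset.coe_image, Finset.coe_Icc]
      have e : σ v - (σ v - 1) = 1 := by omega
      rw [hcol, e]
    have h2 := Finset.card_image_of_injOn hinj
    rw [this] at h2
    rw [Nat.card_Icc] at h2
    omega
  have e : σ v - (σ v - 1) = 1 := by omega
  rw [e] at hcol
  exact ⟨S, hvS, hcl, hcol, hcard⟩


/-- If `σ` is a greedy coloring of a cograph `G` and `G₁` is a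
connected component of `G` with chromatic number `k`, then the set of colors used
on `G₁` is exactly `{1, …, k}`. -/
theorem greedy_coloring_component_colors {V : Type*} [Fintype V]
    (G : SimpleGraph V) (hG : IsCograph G)
    (σ : V → ℕ) (hσ : IsGreedyColoring G σ)
    (C : G.ConnectedComponent) (k : ℕ)
    (hk : (k : ℕ∞) = (G.induce C.supp).chromaticNumber) :
    σ '' C.supp = Set.Icc 1 k := by
  classical
  obtain ⟨hprop, hone, hgr⟩ := id hσ
  obtain ⟨v0, hv0⟩ := C.exists_rep
  have hv0s : v0 ∈ C.supp := by rw [ConnectedComponent.mem_supp_iff]; exact hv0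
  have hsne : C.supp.toFinset.Nonempty := ⟨v0, Set.mem_toFinset.mpr hv0s⟩
  obtain ⟨v, hvF, hvmax⟩ := C.supp.toFinset.exists_max_image σ hsne
  have hvs : v ∈ C.supp := Set.mem_toFinset.mp hvF
  set m := σ v with hm
  have hmax : ∀ u ∈ C.supp, σ u ≤ m := fun u hu => hvmax u (Set.mem_toFinset.mpr hu)
  have himg : σ '' C.supp = Set.Icc 1 m := by
    apply Set.Subset.antisymm
    · rintro c ⟨u, hu, rfl⟩; exact ⟨hone u, hmax u hu⟩
    · rintro c ⟨hc1, hcm⟩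
      rcases eq_or_lt_of_le hcm with he | hlt
      · exact ⟨v, hvs, he.symm⟩
      · obtain ⟨u, hadj, huc⟩ := hgr v c hc1 hlt
        refine ⟨u, ?_, huc⟩
        rw [ConnectedComponent.mem_supp_iff] at hvs ⊢
        rw [← hvs]
        exact (ConnectedComponent.connectedComponentMk_eq_of_adj hadj).symm
  have hcolm : (G.induce C.supp).Colorable m := by
    refine ⟨SimpleGraph.Coloring.mk (fun u => ⟨σ u.1 - 1, by
      have h1 := hmax u.1 u.2; have h2 := hone u.1; omega⟩) ?_⟩
    intro a b hab he
    have hadj : G.Adj a.1 b.1 := hab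
    have h1 := hone a.1
    have h2 := hone b.1
    have h3 := congrArg Fin.val he
    simp only at h3
    exact hprop _ _ hadj (by omega)
  have hkm : k ≤ m := by
    have := hcolm.chromaticNumber_le
    rw [← hk] at this
    exact_mod_cast this
  have hmk : m ≤ k := by
    have hc2 : (G.induce C.supp).Colorable k := by
      have h := (G.induce C.supp).colorable_chromaticNumber_of_fintype
      rw [← hk, ENat.toNat_coe] at h
      exact h
    obtain ⟨Cg⟩ := hc2
    obtain ⟨S, hvS, hcl, hcolS, hcard⟩ := clique_lemma hG hσ v
    have hmem : ∀ s ∈ S, s ∈ C.supp := by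
      intro s hs
      rcases eq_or_ne s v with rfl | hne
      · exact hvs
      · have hadj : G.Adj v s := hcl hvS hs (Ne.symm hne)
        rw [ConnectedComponent.mem_supp_iff] at hvs ⊢
        rw [← hvs]
        exact (ConnectedComponent.connectedComponentMk_eq_of_adj hadj).symm
    have hinj : Function.Injective (fun x : {x // x ∈ S} => Cg ⟨x.1, hmem x.1 x.2⟩) := by
      intro x y hxy
      by_contra hne
      have hne' : x.1 ≠ y.1 := fun e => hne (Subtype.ext e)
      have hadj : G.Adj x.1 y.1 := hcl x.2 y.2 hne'
      have : (G.induce C.supp).Adj ⟨x.1, hmem x.1 x.2⟩ ⟨y.1, hmem y.1 y.2⟩ := hadj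
      exact Cg.valid this hxy
    have := Fintype.card_le_of_injective _ hinj
    rw [Fintype.card_coe, Fintype.card_fin, hcard] at this
    exact this
  rw [himg, le_antisymm hmk hkm]
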